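/- Let p be a prime, q a power of p, and let α, j be integers with 0 ≤ α ≤ q − 1 and 0 ≤ j ≤ q − 1 − α. Then C(q − 1 − α, j) ≡ (−1)^j · C(α + j, α) (mod p), where C denotes the ordinary binomial coefficient. -/

import Mathlib

lemma choose_pow_sub_one (p : ℕ) (hp : p.Prime) (m : ℕ) :
    ∀ k ≤ p ^ m - 1, ((p ^ m - 1).choose k : ZMod p) = (-1) ^ k := by
  intro k
  induction k with
  | zero => simp
  | succ k ih =>
    intro hk
    have hq : 1 ≤ p ^ m := Nat.one_le_pow _ _ hp.pos
    have h0 : ((p ^ m).choose (k + 1) : ZMod p) = 0 := by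
      exact (ZMod.natCast_eq_zero_iff _ _).2
        (hp.dvd_choose_pow (Nat.succ_ne_zero k) (by omega))
    have hpascal : (p ^ m).choose (k + 1)
        = (p ^ m - 1).choose k + (p ^ m - 1).choose (k + 1) := by
      conv_lhs => rw [show p ^ m = (p ^ m - 1) + 1 by omega]
      exact Nat.choose_succ_succ _ _
    have := ih (by omega)
    have h1 : ((p ^ m - 1).choose k : ZMod p) + ((p ^ m - 1).choose (k + 1) : ZMod p) = 0 := by
      rw [← Nat.cast_add, ← hpascal, h0]
    rw [this] at h1
    rw [pow_succ]
    linear_combination h1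

/-- If `q` is a power of the prime `p`, `0 ≤ α ≤ q - 1` and `0 ≤ j ≤ q - 1 - α`,
then `C(q-1-α, j) ≡ (-1)^j · C(α+j, α) (mod p)`. -/
theorem stmt_12 (p : ℕ) (hp : p.Prime) (m q : ℕ) (hq : q = p ^ m)
    (α j : ℕ) (hα : α ≤ q - 1) (hj : j ≤ q - 1 - α) :
    ((q - 1 - α).choose j : ℤ) ≡ (-1) ^ j * ((α + j).choose α : ℤ) [ZMOD (p : ℤ)] := by
  subst hq
  set n := p ^ m - 1 with hn
  have hkey : n.choose (α + j) * (α + j).choose α = n.choose α * (n - α).choose j := by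
    have := Nat.choose_mul (n := n) (k := α + j) (s := α) (by omega)
    simpa using this

  have : (((n - α).choose j : ZMod p)) = (-1) ^ j * ((α + j).choose α : ZMod p) := by
    have h1 := choose_pow_sub_one p hp m (α + j) (by omega)
    have h2 := choose_pow_sub_one p hp m α (by omega)
    have hcast : ((n.choose (α + j) : ZMod p)) * ((α + j).choose α : ZMod p)
        = (n.choose α : ZMod p) * ((n - α).choose j : ZMod p) := by
      exact_mod_cast congrArg (fun x : ℕ => (x : ZMod p)) hkey
    rw [← hn] at h1 h2
    rw [h1, h2] at hcast
    have hinv : ((-1 : ZMod p)) ^ α * (-1 : ZMod p) ^ α = 1 := by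
      rw [← pow_add]
      simp [pow_add, ← two_mul, pow_mul]
    calc ((n - α).choose j : ZMod p)
        = ((-1) ^ α * (-1) ^ α) * ((n - α).choose j : ZMod p) := by rw [hinv, one_mul]
      _ = (-1) ^ α * ((-1) ^ α * ((n - α).choose j : ZMod p)) := by ring
      _ = (-1) ^ α * ((-1) ^ (α + j) * ((α + j).choose α : ZMod p)) := by rw [← hcast]
      _ = (-1) ^ j * ((α + j).choose α : ZMod p) := by
          rw [pow_add]; rw [show ((-1:ZMod p)^α * ((-1)^α * (-1)^j * ((α + j).choose α : ZMod p))) = ((-1)^α * (-1)^α) * ((-1)^j * ((α + j).choose α : ZMod p)) by ring, hinv, one_mul]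
  exact (ZMod.intCast_eq_intCast_iff _ _ _).mp (by push_cast; exact_mod_cast this)
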